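/- Let Ω ⊂ ℝ^{n+1} be δ-Reifenberg flat with δ sufficiently small (depending only on dimension). Then the surface measure σ of ∂Ω satisfies the lower Ahlfors bound: for every (Q,τ) ∈ ∂Ω and R > 0, σ(C_R(Q,τ) ∩ ∂Ω) ≥ (R/2)^{n+1}. -/

import Mathlib

open MeasureTheory Real Set Filter Topology
open scoped ENNReal NNReal BigOperators

noncomputable section

abbrev Pt (n : ℕ) := EuclideanSpace ℝ (Fin n) × ℝ

/-- Real inner product on `ℝ^n`. -/
def ip {n : ℕ} (x y : EuclideanSpace ℝ (Fin n)) : ℝ := inner ℝ x y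

/-- The parabolic cylinder of radius `R` centered at `c`. -/
def pcyl {n : ℕ} (c : Pt n) (R : ℝ) : Set (Pt n) :=
  {p | dist p.1 c.1 < R ∧ |p.2 - c.2| < R ^ 2}

/-- `Ω` is `δ`-Reifenberg flat in the parabolic sense. -/
def ReifenbergFlat {n : ℕ} (Ω : Set (Pt n)) (δ : ℝ) : Prop :=
  ∀ Q ∈ frontier Ω, ∀ R : ℝ, 0 < R →
    ∃ ν : EuclideanSpace ℝ (Fin n), ‖ν‖ = 1 ∧
      (∀ p ∈ pcyl Q R, δ * R < ip (p.1 - Q.1) ν → p ∈ Ω) ∧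
      (∀ p ∈ pcyl Q R, ip (p.1 - Q.1) ν < -(δ * R) → p ∉ closure Ω)

/-- The (unnormalized) parabolic surface measure: integrate the `(n-1)`-dimensional
Hausdorff measure of the time slices. -/
def sliceMeasure (n : ℕ) (F : Set (Pt n)) : ℝ≥0∞ :=
  ∫⁻ t : ℝ, μH[(n : ℝ) - 1] {X : EuclideanSpace ℝ (Fin n) | (X, t) ∈ F}

/- ### Auxiliary lemmas -/

section Aux
open Metric
open scoped Pointwise

lemma crossing {X : Type*} [TopologicalSpace X] (Ω : Set X) {g : ℝ → X}
    (hg : Continuous g) {a b : ℝ} (hab : a ≤ b)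
    (ha : g a ∉ closure Ω) (hb : g b ∈ Ω) : ∃ s ∈ Icc a b, g s ∈ frontier Ω := by
  set K := Icc a b ∩ g ⁻¹' closure Ω with hK
  have hKc : IsClosed K := isClosed_Icc.inter (isClosed_closure.preimage hg)
  have hKne : K.Nonempty := ⟨b, ⟨hab, le_refl b⟩, subset_closure hb⟩
  have hbdd : BddBelow K := ⟨a, fun s hs => hs.1.1⟩
  set c := sInf K with hc
  have hcK : c ∈ K := hKc.csInf_mem hKne hbdd
  have hci : g c ∉ interior Ω := by
    intro hci
    have hopen : IsOpen (g ⁻¹' interior Ω) := isOpen_interior.preimage hg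
    rcases Metric.isOpen_iff.mp hopen c hci with ⟨ε, hε, hball⟩
    have hac : a < c := by
      rcases lt_or_eq_of_le hcK.1.1 with h | h
      · exact h
      · exact absurd (h ▸ hcK.2) ha
    set s := max a (c - ε / 2) with hs
    have hs_lt : s < c := max_lt hac (by linarith)
    have hsK : s ∈ K := by
      refine ⟨⟨le_max_left _ _, hs_lt.le.trans hcK.1.2⟩, ?_⟩
      have hsb : s ∈ Metric.ball c ε := by
        have h1 : c - ε / 2 ≤ s := le_max_right _ _
        simp only [Metric.mem_ball, Real.dist_eq, abs_lt]
        constructor <;> linarith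
      exact subset_closure (interior_subset (hball hsb))
    exact absurd (csInf_le hbdd hsK) (not_le.mpr hs_lt)
  exact ⟨c, hcK.1, hcK.2, hci⟩

lemma norm_proj_le {n : ℕ} {ν : EuclideanSpace ℝ (Fin n)} (hν : ‖ν‖ = 1)
    (v : EuclideanSpace ℝ (Fin n)) : ‖v - ip v ν • ν‖ ≤ ‖v‖ := by
  have h : ‖v - ip v ν • ν‖ ^ 2 = ‖v‖ ^ 2 - ip v ν ^ 2 := by
    rw [norm_sub_sq_real, real_inner_smul_right, norm_smul, hν]
    simp only [ip, Real.norm_eq_abs, mul_one]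
    rw [sq_abs]
    ring
  nlinarith [norm_nonneg (v - ip v ν • ν), norm_nonneg v, sq_nonneg (ip v ν)]

lemma proj_lip {n : ℕ} {ν : EuclideanSpace ℝ (Fin n)} (hν : ‖ν‖ = 1)
    (q : EuclideanSpace ℝ (Fin n)) :
    LipschitzWith 1 (fun X : EuclideanSpace ℝ (Fin n) => X - ip (X - q) ν • ν) := by
  refine LipschitzWith.of_dist_le_mul fun X Y => ?_
  rw [NNReal.coe_one, one_mul, dist_eq_norm, dist_eq_norm]
  have hXY : (X - ip (X - q) ν • ν) - (Y - ip (Y - q) ν • ν)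
      = (X - Y) - ip (X - Y) ν • ν := by
    have h : ip (X - q) ν - ip (Y - q) ν = ip (X - Y) ν := by
      simp only [ip, inner_sub_left]; ring
    rw [← h]; module
  rw [hXY]
  exact norm_proj_le hν _

lemma disk_eq {n : ℕ} (ν q : EuclideanSpace ℝ (Fin n)) {r : ℝ} (hr : 0 < r) :
    ball q r ∩ {X | ip (X - q) ν = 0}
      = q +ᵥ r • (ball (0 : EuclideanSpace ℝ (Fin n)) 1 ∩ {X | ip X ν = 0}) := by
  ext Y
  constructor
  · rintro ⟨h1, h2⟩
    refine ⟨Y - q, ?_, by simp [vadd_eq_add]⟩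
    rw [Set.mem_smul_set_iff_inv_smul_mem₀ hr.ne']
    constructor
    · rw [mem_ball, dist_zero_right, norm_smul, Real.norm_eq_abs, abs_inv, abs_of_pos hr,
        inv_mul_lt_iff₀ hr, mul_one, ← dist_eq_norm]
      exact mem_ball.mp h1
    · simp only [ip, real_inner_smul_left, Set.mem_setOf_eq] at h2 ⊢
      rw [h2, mul_zero]
  · rintro ⟨z, hz, rfl⟩
    obtain ⟨X, ⟨hX1, hX2⟩, rfl⟩ := hz
    rw [mem_ball, dist_zero_right] at hX1
    simp only [ip, Set.mem_setOf_eq] at hX2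
    have hsub : (q +ᵥ r • X) - q = r • X := by simp only [vadd_eq_add]; abel
    constructor
    · show dist (q +ᵥ r • X) q < r
      rw [dist_eq_norm, hsub, norm_smul, Real.norm_eq_abs, abs_of_pos hr]
      calc r * ‖X‖ < r * 1 := mul_lt_mul_of_pos_left hX1 hr
        _ = r := mul_one r
    · show ip ((q +ᵥ r • X) - q) ν = 0
      rw [ip, hsub, real_inner_smul_left, hX2, mul_zero]

lemma disk_meas {n : ℕ} (ν q : EuclideanSpace ℝ (Fin n)) {r : ℝ} (hr : 0 < r) (m : ℕ) :
    μH[(m : ℝ)] (ball q r ∩ {X | ip (X - q) ν = 0})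
      = (ENNReal.ofReal r) ^ m
        * μH[(m : ℝ)] (ball (0 : EuclideanSpace ℝ (Fin n)) 1 ∩ {X | ip X ν = 0}) := by
  rw [disk_eq ν q hr, hausdorffMeasure_vadd _ (Or.inl (by positivity)),
    Measure.hausdorffMeasure_smul₀ (by positivity) hr.ne' _, ENNReal.smul_def, smul_eq_mul]
  rw [NNReal.rpow_natCast, ENNReal.coe_pow, ← enorm_eq_nnnorm, Real.enorm_eq_ofReal hr.le]

end Aux

/-- if `Ω` is `δ`-Reifenberg flat with `δ` small (depending only on `n`),
then the parabolic surface measure `σ = κ · sliceMeasure` (normalized so that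
`σ(C_1(0,0) ∩ V) = 1` for every `n`-plane `V` through the origin containing the time
direction) satisfies the lower Ahlfors bound `σ(C_R(Q,τ) ∩ ∂Ω) ≥ (R/2)^{n+1}`. -/
theorem statement2 (n : ℕ) :
    ∃ δ₀ : ℝ, 0 < δ₀ ∧
      ∀ (Ω : Set (Pt n)) (δ κ : ℝ), 0 < δ → δ < δ₀ → 0 < κ →
        (∀ ν : EuclideanSpace ℝ (Fin n), ‖ν‖ = 1 →
          ENNReal.ofReal κ *
              sliceMeasure n (pcyl (0 : Pt n) 1 ∩ {p : Pt n | ip p.1 ν = 0}) = 1) →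
        ReifenbergFlat Ω δ →
        ∀ Q ∈ frontier Ω, ∀ R : ℝ, 0 < R →
          ENNReal.ofReal ((R / 2) ^ (n + 1)) ≤
            ENNReal.ofReal κ * sliceMeasure n (pcyl Q R ∩ frontier Ω) := by
  refine ⟨1 / 4, by norm_num, ?_⟩
  intro Ω δ κ hδ hδ₀ hκpos hκ hRF Q hQ R hR
  obtain _ | m := n
  · -- the case n = 0 is impossible: there is no unit vector
    exfalso
    obtain ⟨ν, hν, -, -⟩ := hRF Q hQ R hR
    have : ν = 0 := Subsingleton.elim ν 0
    rw [this, norm_zero] at hν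
    norm_num at hν
  obtain ⟨ν, hν, hin, hout⟩ := hRF Q hQ R hR
  have hdeq : ((m + 1 : ℕ) : ℝ) - 1 = (m : ℝ) := by push_cast; ring
  set r : ℝ := R / 2 with hr_def
  have hr : 0 < r := by positivity
  set Dν : Set (EuclideanSpace ℝ (Fin (m + 1))) :=
    Metric.ball 0 1 ∩ {X | ip X ν = 0} with hDν
  set D' : Set (EuclideanSpace ℝ (Fin (m + 1))) :=
    Metric.ball Q.1 r ∩ {X | ip (X - Q.1) ν = 0} with hD'
  -- normalization : κ * (2 * μH Dν) = 1
  have hnorm : ENNReal.ofReal κ * (2 * μH[(m : ℝ)] Dν) = 1 := by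
    have h1 := hκ ν hν
    rw [sliceMeasure] at h1
    rw [← h1]
    congr 1
    rw [hdeq] at h1 ⊢
    have hfun : (fun t : ℝ => μH[(m : ℝ)]
        {X : EuclideanSpace ℝ (Fin (m + 1)) |
          (X, t) ∈ pcyl (0 : Pt (m + 1)) 1 ∩ {p : Pt (m + 1) | ip p.1 ν = 0}})
        = (Ioo (-1 : ℝ) 1).indicator (fun _ => μH[(m : ℝ)] Dν) := by
      funext t
      by_cases ht : t ∈ Ioo (-1 : ℝ) 1
      · rw [Set.indicator_of_mem ht]
        congr 1
        ext X
        simp only [hDν, pcyl, Set.mem_inter_iff, Set.mem_setOf_eq, Prod.fst_zero, Prod.snd_zero,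
          sub_zero, one_pow, Metric.mem_ball]
        rw [mem_Ioo] at ht
        constructor
        · rintro ⟨⟨h1, -⟩, h2⟩; exact ⟨h1, h2⟩
        · rintro ⟨h1, h2⟩; exact ⟨⟨h1, abs_lt.mpr ⟨by linarith [ht.1], by linarith [ht.2]⟩⟩, h2⟩
      · rw [Set.indicator_of_notMem ht]
        have hemp : {X : EuclideanSpace ℝ (Fin (m + 1)) |
            (X, t) ∈ pcyl (0 : Pt (m + 1)) 1 ∩ {p : Pt (m + 1) | ip p.1 ν = 0}} = ∅ := by
          ext X
          simp only [pcyl, Set.mem_inter_iff, Set.mem_setOf_eq, Prod.fst_zero, Prod.snd_zero,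
            sub_zero, one_pow, Set.mem_empty_iff_false, iff_false]
          rintro ⟨⟨-, h2⟩, -⟩
          rw [mem_Ioo] at ht
          rw [abs_lt] at h2
          exact ht ⟨h2.1, h2.2⟩
        rw [hemp, measure_empty]
    rw [hfun, lintegral_indicator measurableSet_Ioo, setLIntegral_const, Real.volume_Ioo]
    rw [show (1 : ℝ) - (-1) = 2 by norm_num, ENNReal.ofReal_ofNat, mul_comm]
  -- inner product computation along the normal direction
  have hipcalc : ∀ (Y : EuclideanSpace ℝ (Fin (m + 1))), ip (Y - Q.1) ν = 0 →
      ∀ s : ℝ, ip ((Y + s • ν) - Q.1) ν = s := by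
    intro Y hY2 s
    have h : (Y + s • ν) - Q.1 = (Y - Q.1) + s • ν := by abel
    rw [ip, h, inner_add_left, real_inner_smul_left, real_inner_self_eq_norm_sq, hν]
    rw [ip] at hY2
    rw [hY2]
    ring
  -- key slice bound : each slice of the frontier has measure at least that of the disk
  have hkey : ∀ t ∈ Ioo (Q.2 - r ^ 2) (Q.2 + r ^ 2),
      μH[(m : ℝ)] D' ≤ μH[(m : ℝ)] {X : EuclideanSpace ℝ (Fin (m + 1)) |
        (X, t) ∈ pcyl Q R ∩ frontier Ω} := by
    intro t ht
    rw [mem_Ioo] at ht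
    set prj := fun X : EuclideanSpace ℝ (Fin (m + 1)) => X - ip (X - Q.1) ν • ν with hprj
    have hcover : D' ⊆ prj '' {X : EuclideanSpace ℝ (Fin (m + 1)) |
        (X, t) ∈ pcyl Q R ∩ frontier Ω} := by
      rintro Y ⟨hY1, hY2⟩
      rw [Metric.mem_ball] at hY1
      rw [Set.mem_setOf_eq] at hY2
      have hmemcyl : ∀ s : ℝ, |s| ≤ r → (Y + s • ν, t) ∈ pcyl Q R := by
        intro s hs
        constructor
        · show dist (Y + s • ν) Q.1 < R
          calc dist (Y + s • ν) Q.1 ≤ dist (Y + s • ν) Y + dist Y Q.1 := dist_triangle _ _ _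
            _ = ‖s • ν‖ + dist Y Q.1 := by
                have hYs : Y + s • ν - Y = s • ν := by module
                rw [dist_eq_norm, hYs]
            _ = |s| + dist Y Q.1 := by rw [norm_smul, Real.norm_eq_abs, hν, mul_one]
            _ < r + r := add_lt_add_of_le_of_lt hs hY1
            _ = R := by rw [hr_def]; ring
        · show |t - Q.2| < R ^ 2
          rw [abs_lt]
          have h2 : r ^ 2 ≤ R ^ 2 := by nlinarith
          constructor <;> nlinarith [ht.1, ht.2]
      have hδr : δ * R < r := by rw [hr_def]; nlinarith
      have hb : ((Y + r • ν, t) : Pt (m + 1)) ∈ Ω := by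
        refine hin _ (hmemcyl r (le_of_eq (abs_of_pos hr))) ?_
        show δ * R < ip ((Y + r • ν) - Q.1) ν
        rw [hipcalc Y hY2]
        exact hδr
      have ha : ((Y + (-r) • ν, t) : Pt (m + 1)) ∉ closure Ω := by
        refine hout _ (hmemcyl (-r) (le_of_eq (by rw [abs_neg, abs_of_pos hr]))) ?_
        show ip ((Y + (-r) • ν) - Q.1) ν < -(δ * R)
        rw [hipcalc Y hY2]
        linarith
      have hg : Continuous (fun s : ℝ => ((Y + s • ν, t) : Pt (m + 1))) := by
        apply Continuous.prodMk
        · exact continuous_const.add (continuous_id.smul continuous_const)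
        · exact continuous_const
      obtain ⟨s, hs, hsf⟩ := crossing Ω hg (by linarith : -r ≤ r) ha hb
      rw [mem_Icc] at hs
      refine ⟨Y + s • ν, ⟨hmemcyl s (abs_le.mpr ⟨hs.1, hs.2⟩), hsf⟩, ?_⟩
      show (Y + s • ν) - ip ((Y + s • ν) - Q.1) ν • ν = Y
      rw [hipcalc Y hY2]
      abel
    calc μH[(m : ℝ)] D'
        ≤ μH[(m : ℝ)] (prj '' {X : EuclideanSpace ℝ (Fin (m + 1)) |
            (X, t) ∈ pcyl Q R ∩ frontier Ω}) := measure_mono hcover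
      _ ≤ ((1 : ℝ≥0) : ℝ≥0∞) ^ (m : ℝ) * μH[(m : ℝ)] {X : EuclideanSpace ℝ (Fin (m + 1)) |
            (X, t) ∈ pcyl Q R ∩ frontier Ω} :=
          (proj_lip hν Q.1).hausdorffMeasure_image_le (by positivity) _
      _ = μH[(m : ℝ)] {X : EuclideanSpace ℝ (Fin (m + 1)) |
            (X, t) ∈ pcyl Q R ∩ frontier Ω} := by
          rw [ENNReal.coe_one, ENNReal.one_rpow, one_mul]
  -- lower bound for the slice measure of the frontier piece
  have hmD' : μH[(m : ℝ)] D' = ENNReal.ofReal r ^ m * μH[(m : ℝ)] Dν := by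
    rw [hD', hDν]
    exact disk_meas ν Q.1 hr m
  have hlow : ENNReal.ofReal r ^ m * μH[(m : ℝ)] Dν * ENNReal.ofReal (2 * r ^ 2)
      ≤ sliceMeasure (m + 1) (pcyl Q R ∩ frontier Ω) := by
    rw [sliceMeasure, hdeq]
    have hpt : ∀ t : ℝ, (Ioo (Q.2 - r ^ 2) (Q.2 + r ^ 2)).indicator
        (fun _ => μH[(m : ℝ)] D') t ≤ μH[(m : ℝ)] {X : EuclideanSpace ℝ (Fin (m + 1)) |
          (X, t) ∈ pcyl Q R ∩ frontier Ω} := by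
      intro t
      by_cases ht : t ∈ Ioo (Q.2 - r ^ 2) (Q.2 + r ^ 2)
      · rw [Set.indicator_of_mem ht]
        exact hkey t ht
      · rw [Set.indicator_of_notMem ht]
        exact zero_le
    calc ENNReal.ofReal r ^ m * μH[(m : ℝ)] Dν * ENNReal.ofReal (2 * r ^ 2)
        = ∫⁻ t : ℝ, (Ioo (Q.2 - r ^ 2) (Q.2 + r ^ 2)).indicator
            (fun _ => μH[(m : ℝ)] D') t := by
          rw [lintegral_indicator measurableSet_Ioo, setLIntegral_const, Real.volume_Ioo,
            show Q.2 + r ^ 2 - (Q.2 - r ^ 2) = 2 * r ^ 2 by ring, hmD']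
      _ ≤ _ := lintegral_mono hpt
  -- put everything together
  have hofr : ENNReal.ofReal (2 * r ^ 2) = 2 * ENNReal.ofReal r ^ 2 := by
    rw [ENNReal.ofReal_mul (by norm_num), ENNReal.ofReal_ofNat, ENNReal.ofReal_pow hr.le]
  calc ENNReal.ofReal ((R / 2) ^ (m + 1 + 1))
      = ENNReal.ofReal r ^ (m + 2) := by rw [ENNReal.ofReal_pow hr.le]
    _ = ENNReal.ofReal r ^ m * ENNReal.ofReal r ^ 2 * 1 := by ring
    _ = ENNReal.ofReal r ^ m * ENNReal.ofReal r ^ 2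
        * (ENNReal.ofReal κ * (2 * μH[(m : ℝ)] Dν)) := by rw [hnorm]
    _ = ENNReal.ofReal κ
        * (ENNReal.ofReal r ^ m * μH[(m : ℝ)] Dν * (2 * ENNReal.ofReal r ^ 2)) := by ring
    _ = ENNReal.ofReal κ
        * (ENNReal.ofReal r ^ m * μH[(m : ℝ)] Dν * ENNReal.ofReal (2 * r ^ 2)) := by
          rw [hofr]
    _ ≤ ENNReal.ofReal κ * sliceMeasure (m + 1) (pcyl Q R ∩ frontier Ω) :=
          mul_le_mul_right hlow _
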